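/- Let m, n ≥ 2 be integers with n dividing m, and regard ℤ_n as a ℤ_m-module. Write α_p and β_p for the multiplicities of a prime p in m and n respectively. If α_p ≤ 2β_p − 1 for every prime p dividing n, then G_n(ℤ_m) is weakly perfect, i.e., its chromatic number equals its clique number. -/

import Mathlib

open Finset

def Ddef (n d : ℕ) : Finset ℕ :=
  n.primeFactors.filter (fun p => ¬ p ^ n.factorization p ∣ d)

lemma prod_pp_dvd {s : Finset ℕ} {f : ℕ → ℕ} {d : ℕ} (hs : ∀ p ∈ s, p.Prime)
    (hdvd : ∀ p ∈ s, p ^ f p ∣ d) : (∏ p ∈ s, p ^ f p) ∣ d := by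
  classical
  induction s using Finset.induction with
  | empty => simp
  | @insert a s ha ih =>
    rw [Finset.prod_insert ha]
    have hcop : Nat.Coprime (a ^ f a) (∏ p ∈ s, p ^ f p) := by
      apply Nat.Coprime.pow_left
      apply Nat.Coprime.prod_right
      intro q hq
      apply Nat.Coprime.pow_right
      exact (Nat.coprime_primes (hs a (Finset.mem_insert_self a s))
        (hs q (Finset.mem_insert_of_mem hq))).mpr (by rintro rfl; exact ha hq)
    exact hcop.mul_dvd_of_dvd_of_dvd (hdvd a (Finset.mem_insert_self a s))
      (ih (fun p hp => hs p (Finset.mem_insert_of_mem hp))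
          (fun p hp => hdvd p (Finset.mem_insert_of_mem hp)))

lemma prod_pp_factorization {s : Finset ℕ} {f : ℕ → ℕ} (hs : ∀ p ∈ s, p.Prime) (q : ℕ) :
    (∏ p ∈ s, p ^ f p).factorization q = if q ∈ s then f q else 0 := by
  classical
  rw [Nat.factorization_prod (fun p hp => pow_ne_zero _ (hs p hp).pos.ne')]
  rw [Finset.sum_apply']
  rw [Finset.sum_congr rfl (fun p hp => by
    rw [Nat.Prime.factorization_pow (hs p hp), Finsupp.single_apply])]
  exact Finset.sum_ite_eq' s q f

lemma div_shift (m n : ℕ) (hm2 : 2 ≤ m) (hn2 : 2 ≤ n) (hnm : n ∣ m)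
    (hle : ∀ p : ℕ, p.Prime → p ∣ n → m.factorization p ≤ 2 * n.factorization p - 1)
    {B C : Finset ℕ} (hB : B.Nonempty) (hBC : B ⊆ C) (hCP : C ⊂ n.primeFactors)
    {d : ℕ} (hdm : d ∣ m) (hDd : Ddef n d = B) :
    ∃ d', d' ∣ m ∧ d' ≠ 1 ∧ d' ≠ m ∧ Ddef n d' = C ∧
      d' * (∏ p ∈ C \ B, p ^ n.factorization p) = d := by
  classical
  have hm0 : m ≠ 0 := by omega
  have hn0 : n ≠ 0 := by omega
  have hd0 : d ≠ 0 := by rintro rfl; exact hm0 (Nat.eq_zero_of_zero_dvd hdm)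
  have hCsub : C ⊆ n.primeFactors := hCP.subset
  have hprime : ∀ p ∈ C \ B, p.Prime := fun p hp =>
    Nat.prime_of_mem_primeFactors (hCsub (Finset.mem_sdiff.mp hp).1)
  have hdvdall : ∀ p ∈ C \ B, p ^ n.factorization p ∣ d := by
    intro p hp
    obtain ⟨hpC, hpB⟩ := Finset.mem_sdiff.mp hp
    by_contra hnd
    exact hpB (hDd ▸ Finset.mem_filter.mpr ⟨hCsub hpC, hnd⟩)
  set k := ∏ p ∈ C \ B, p ^ n.factorization p with hk
  have hkd : k ∣ d := prod_pp_dvd hprime hdvdall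
  set d' := d / k with hd'
  have hd'k : d' * k = d := Nat.div_mul_cancel hkd
  have hd'dvd : d' ∣ d := ⟨k, hd'k.symm⟩
  have hd'm : d' ∣ m := hd'dvd.trans hdm
  have hd'0 : d' ≠ 0 := by
    rintro h; rw [h, zero_mul] at hd'k; exact hd0 hd'k.symm
  have hfact : ∀ q, d'.factorization q =
      d.factorization q - (if q ∈ C \ B then n.factorization q else 0) := by
    intro q
    rw [hd', Nat.factorization_div hkd]
    rw [Finsupp.tsub_apply]
    rw [prod_pp_factorization hprime q]
  have hDd' : Ddef n d' = C := by
    ext p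
    simp only [Ddef, Finset.mem_filter]
    constructor
    · rintro ⟨hpP, hnd⟩
      by_contra hpC
      -- p ∉ C: then p ∉ B, so p^β ∣ d, and k-part is 0, so p^β ∣ d'
      have hpB : p ∉ B := fun h => hpC (hBC h)
      have hpd : p ^ n.factorization p ∣ d := by
        by_contra hnd2
        exact hpB (hDd ▸ Finset.mem_filter.mpr ⟨hpP, hnd2⟩)
      have hpp : p.Prime := Nat.prime_of_mem_primeFactors hpP
      apply hnd
      rw [Nat.Prime.pow_dvd_iff_le_factorization hpp hd'0, hfact p,
        if_neg (fun h => hpC (Finset.mem_sdiff.mp h).1)]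
      rw [Nat.Prime.pow_dvd_iff_le_factorization hpp hd0] at hpd
      omega
    · intro hpC
      have hpP : p ∈ n.primeFactors := hCsub hpC
      have hpp : p.Prime := Nat.prime_of_mem_primeFactors hpP
      refine ⟨hpP, ?_⟩
      rw [Nat.Prime.pow_dvd_iff_le_factorization hpp hd'0, hfact p]
      by_cases hpB : p ∈ B
      · -- deficiency preserved
        have hnd : ¬ p ^ n.factorization p ∣ d := by
          have := hDd ▸ hpB
          exact (Finset.mem_filter.mp this).2
        rw [Nat.Prime.pow_dvd_iff_le_factorization hpp hd0] at hnd
        rw [if_neg (fun h => (Finset.mem_sdiff.mp h).2 hpB)]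
        omega
      · -- p ∈ C \ B : use the α ≤ 2β - 1 bound
        have hpCB : p ∈ C \ B := Finset.mem_sdiff.mpr ⟨hpC, hpB⟩
        rw [if_pos hpCB]
        have hβpos : n.factorization p ≠ 0 := by
          rw [← Finsupp.mem_support_iff, Nat.support_factorization]
          exact hpP
        have hα : d.factorization p ≤ m.factorization p :=
          (Nat.factorization_le_iff_dvd hd0 hm0).mpr hdm p
        have hαβ : m.factorization p ≤ 2 * n.factorization p - 1 :=
          hle p hpp (Nat.dvd_of_mem_primeFactors hpP)
        omega
  refine ⟨d', hd'm, ?_, ?_, hDd', hd'k⟩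
  · intro h1eq
    -- Ddef n 1 = primeFactors, but C ⊂ primeFactors
    obtain ⟨q, hqP, hqC⟩ := Finset.exists_of_ssubset hCP
    rw [← hDd', h1eq] at hqC
    apply hqC
    rw [Ddef, Finset.mem_filter]
    refine ⟨hqP, fun h1 => ?_⟩
    have hqp : q.Prime := Nat.prime_of_mem_primeFactors hqP
    have hβ : n.factorization q ≠ 0 := by
      rw [← Finsupp.mem_support_iff, Nat.support_factorization]; exact hqP
    rw [Nat.dvd_one] at h1
    have : 1 < q ^ n.factorization q := Nat.one_lt_pow hβ hqp.one_lt
    omega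
  · intro hmeq
    -- Ddef n m = ∅ but C ⊇ B nonempty
    obtain ⟨q, hqB⟩ := hB
    have hqC : q ∈ Ddef n d' := hDd' ▸ hBC hqB
    rw [hmeq] at hqC
    rw [Ddef, Finset.mem_filter] at hqC
    exact hqC.2 ((Nat.ordProj_dvd n q).trans hnm)



lemma lcm_gcd_ne_iff {n : ℕ} (hn2 : 2 ≤ n) {d e : ℕ} (hd0 : d ≠ 0) (he0 : e ≠ 0) :
    Nat.lcm (Nat.gcd d n) (Nat.gcd e n) ≠ n ↔ ((Ddef n d) ∩ (Ddef n e)).Nonempty := by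
  have hn0 : n ≠ 0 := by omega
  set g1 := Nat.gcd d n with hg1d
  set g2 := Nat.gcd e n with hg2d
  have hg1 : g1 ≠ 0 := Nat.gcd_ne_zero_right hn0
  have hg2 : g2 ≠ 0 := Nat.gcd_ne_zero_right hn0
  have hl0 : Nat.lcm g1 g2 ≠ 0 := Nat.lcm_ne_zero hg1 hg2
  have hln : Nat.lcm g1 g2 ∣ n := Nat.lcm_dvd (Nat.gcd_dvd_right d n) (Nat.gcd_dvd_right e n)
  constructor
  · intro hne
    have hndvd : ¬ n ∣ Nat.lcm g1 g2 := fun h => hne (Nat.dvd_antisymm hln h)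
    rw [← Nat.factorization_le_iff_dvd hn0 hl0, Finsupp.le_def] at hndvd
    push_neg at hndvd
    obtain ⟨p, hp⟩ := hndvd
    have hpP : p ∈ n.primeFactors := by
      rw [← Nat.support_factorization, Finsupp.mem_support_iff]
      omega
    have hpp : p.Prime := Nat.prime_of_mem_primeFactors hpP
    refine ⟨p, Finset.mem_inter.mpr ⟨?_, ?_⟩⟩
    · rw [Ddef, Finset.mem_filter]
      refine ⟨hpP, fun hdvd => ?_⟩
      have h1 : p ^ n.factorization p ∣ g1 := Nat.dvd_gcd hdvd (Nat.ordProj_dvd n p)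
      have h2 : p ^ n.factorization p ∣ Nat.lcm g1 g2 := h1.trans (Nat.dvd_lcm_left _ _)
      rw [Nat.Prime.pow_dvd_iff_le_factorization hpp hl0] at h2
      omega
    · rw [Ddef, Finset.mem_filter]
      refine ⟨hpP, fun hdvd => ?_⟩
      have h1 : p ^ n.factorization p ∣ g2 := Nat.dvd_gcd hdvd (Nat.ordProj_dvd n p)
      have h2 : p ^ n.factorization p ∣ Nat.lcm g1 g2 := h1.trans (Nat.dvd_lcm_right _ _)
      rw [Nat.Prime.pow_dvd_iff_le_factorization hpp hl0] at h2
      omega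
  · rintro ⟨p, hp⟩
    rw [Finset.mem_inter, Ddef, Ddef, Finset.mem_filter, Finset.mem_filter] at hp
    obtain ⟨⟨hpP, hpd⟩, _, hpe⟩ := hp
    have hpp : p.Prime := Nat.prime_of_mem_primeFactors hpP
    intro heq
    have hβ : n.factorization p ≤ (Nat.lcm g1 g2).factorization p := by
      rw [heq]
    rw [Nat.factorization_lcm hg1 hg2, Finsupp.sup_apply, le_sup_iff] at hβ
    rcases hβ with h | h
    · rw [← Nat.Prime.pow_dvd_iff_le_factorization hpp hg1] at h
      exact hpd (h.trans (Nat.gcd_dvd_left d n))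
    · rw [← Nat.Prime.pow_dvd_iff_le_factorization hpp hg2] at h
      exact hpe (h.trans (Nat.gcd_dvd_left e n))


lemma zmod_mem_span_iff {m : ℕ} (hm : m ≠ 0) {d : ℕ} (hd : d ∣ m) (x : ZMod m) :
    x ∈ Ideal.span {(d : ZMod m)} ↔ d ∣ x.val := by
  haveI : NeZero m := ⟨hm⟩
  rw [Ideal.mem_span_singleton]
  constructor
  · rintro ⟨c, rfl⟩
    rw [ZMod.val_mul, ZMod.val_natCast]
    rw [Nat.dvd_mod_iff hd]
    exact Dvd.dvd.mul_right ((Nat.dvd_mod_iff hd).mpr dvd_rfl) _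
  · rintro ⟨c, hc⟩
    refine ⟨(c : ZMod m), ?_⟩
    calc x = ((x.val : ℕ) : ZMod m) := (ZMod.natCast_rightInverse x).symm
    _ = ((d * c : ℕ) : ZMod m) := by rw [hc]
    _ = (d : ZMod m) * (c : ZMod m) := by push_cast; ring

lemma zmod_span_gcd {m : ℕ} (hm : m ≠ 0) (x : ZMod m) :
    Ideal.span {x} = Ideal.span {(Nat.gcd (x.val) m : ZMod m)} := by
  haveI : NeZero m := ⟨hm⟩
  apply le_antisymm
  · rw [Ideal.span_singleton_le_span_singleton]
    obtain ⟨c, hc⟩ := Nat.gcd_dvd_left x.val m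
    refine ⟨(c : ZMod m), ?_⟩
    calc x = ((x.val : ℕ) : ZMod m) := (ZMod.natCast_rightInverse x).symm
    _ = ((Nat.gcd x.val m * c : ℕ) : ZMod m) := by rw [← hc]
    _ = _ := by push_cast; ring
  · rw [Ideal.span_singleton_le_span_singleton]
    have hb := congrArg (fun z : ℤ => (z : ZMod m)) (Nat.gcd_eq_gcd_ab x.val m)
    push_cast at hb
    rw [ZMod.natCast_self, zero_mul, add_zero, ZMod.natCast_rightInverse x] at hb
    exact ⟨(Nat.gcdA x.val m : ZMod m), hb⟩

lemma zmod_span_divisor_inj {m : ℕ} (hm : 2 ≤ m) {d e : ℕ}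
    (hd : d ∣ m) (hd' : d ≠ m) (he : e ∣ m) (he' : e ≠ m)
    (h : Ideal.span {(d : ZMod m)} = Ideal.span {(e : ZMod m)}) : d = e := by
  have hm0 : m ≠ 0 := by omega
  have hdlt : d < m := lt_of_le_of_ne (Nat.le_of_dvd (by omega) hd) hd'
  have helt : e < m := lt_of_le_of_ne (Nat.le_of_dvd (by omega) he) he'
  have h1 : (e : ZMod m) ∈ Ideal.span {(d : ZMod m)} := by
    rw [h]; exact Ideal.mem_span_singleton_self _
  have h2 : (d : ZMod m) ∈ Ideal.span {(e : ZMod m)} := by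
    rw [← h]; exact Ideal.mem_span_singleton_self _
  rw [zmod_mem_span_iff hm0 hd, ZMod.val_natCast_of_lt helt] at h1
  rw [zmod_mem_span_iff hm0 he, ZMod.val_natCast_of_lt hdlt] at h2
  exact Nat.dvd_antisymm h1 h2

lemma zmod_exists_divisor_span {m : ℕ} (hm : 2 ≤ m)
    (I : Ideal (ZMod m)) (hb : I ≠ ⊥) (ht : I ≠ ⊤) :
    ∃ d : ℕ, d ∣ m ∧ d ≠ 1 ∧ d ≠ m ∧ I = Ideal.span {(d : ZMod m)} := by
  haveI : NeZero m := ⟨by omega⟩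
  haveI : IsPrincipalIdealRing (ZMod m) :=
    IsPrincipalIdealRing.of_surjective (Int.castRingHom (ZMod m)) ZMod.intCast_surjective
  haveI : I.IsPrincipal := IsPrincipalIdealRing.principal I
  set x := Submodule.IsPrincipal.generator I with hx
  have hI : I = Ideal.span {x} := (Ideal.span_singleton_generator I).symm
  set d := Nat.gcd x.val m with hdd
  have hspan : I = Ideal.span {(d : ZMod m)} := by rw [hI, zmod_span_gcd (by omega) x]
  refine ⟨d, Nat.gcd_dvd_right _ _, ?_, ?_, hspan⟩
  · rintro h1
    apply ht
    rw [hspan, h1]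
    simp [Ideal.span_singleton_one]
  · rintro h1
    apply hb
    rw [hspan, h1, ZMod.natCast_self]
    exact Ideal.span_singleton_eq_bot.mpr rfl


lemma zmod_smul_top_mem_iff {m n : ℕ} (hm : 2 ≤ m) (hn : 2 ≤ n) (hnm : n ∣ m)
    [Module (ZMod m) (ZMod n)]
    (hsmul : ∀ (a : ZMod m) (x : ZMod n), a • x = ZMod.castHom hnm (ZMod n) a * x)
    {d : ℕ} (x : ZMod n) :
    x ∈ (Ideal.span {(d : ZMod m)} • (⊤ : Submodule (ZMod m) (ZMod n))) ↔
      Nat.gcd d n ∣ x.val := by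
  haveI : NeZero n := ⟨by omega⟩
  haveI : NeZero m := ⟨by omega⟩
  constructor
  · intro hx
    refine Submodule.smul_induction_on hx ?_ ?_
    · intro r hr y _
      rw [Ideal.mem_span_singleton] at hr
      obtain ⟨c, rfl⟩ := hr
      rw [hsmul]
      rw [map_mul, map_natCast]
      rw [mul_assoc, ZMod.val_mul, ZMod.val_natCast]
      rw [Nat.dvd_mod_iff (Nat.gcd_dvd_right d n)]
      exact Dvd.dvd.mul_right
        ((Nat.dvd_mod_iff (Nat.gcd_dvd_right d n)).mpr (Nat.gcd_dvd_left d n)) _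
    · intro y z hy hz
      rw [ZMod.val_add, Nat.dvd_mod_iff (Nat.gcd_dvd_right d n)]
      exact Nat.dvd_add hy hz
  · rintro ⟨c, hc⟩
    have hb := congrArg (fun z : ℤ => (z : ZMod n)) (Nat.gcd_eq_gcd_ab d n)
    push_cast at hb
    rw [ZMod.natCast_self, zero_mul, add_zero] at hb
    have hx : x = (d : ZMod m) • ((Nat.gcdA d n : ZMod n) * (c : ZMod n)) := by
      rw [hsmul, map_natCast]
      calc x = ((x.val : ℕ) : ZMod n) := (ZMod.natCast_rightInverse x).symm
      _ = ((Nat.gcd d n * c : ℕ) : ZMod n) := by rw [hc]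
      _ = ((Nat.gcd d n : ℕ) : ZMod n) * (c : ZMod n) := by push_cast; ring
      _ = (d : ZMod n) * ((Nat.gcdA d n : ZMod n) * (c : ZMod n)) := by
            rw [hb]; ring
    rw [hx]
    exact Submodule.smul_mem_smul (Ideal.mem_span_singleton_self _) trivial

lemma zmod_inf_ne_bot_iff {m n : ℕ} (hm : 2 ≤ m) (hn : 2 ≤ n) (hnm : n ∣ m)
    [Module (ZMod m) (ZMod n)]
    (hsmul : ∀ (a : ZMod m) (x : ZMod n), a • x = ZMod.castHom hnm (ZMod n) a * x)
    {d e : ℕ} :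
    ((Ideal.span {(d : ZMod m)} • (⊤ : Submodule (ZMod m) (ZMod n))) ⊓
      (Ideal.span {(e : ZMod m)} • (⊤ : Submodule (ZMod m) (ZMod n))) ≠ ⊥) ↔
      Nat.lcm (Nat.gcd d n) (Nat.gcd e n) ≠ n := by
  haveI : NeZero n := ⟨by omega⟩
  set g1 := Nat.gcd d n
  set g2 := Nat.gcd e n
  have hg1 : g1 ≠ 0 := Nat.gcd_ne_zero_right (by omega)
  have hg2 : g2 ≠ 0 := Nat.gcd_ne_zero_right (by omega)
  have hl0 : Nat.lcm g1 g2 ≠ 0 := Nat.lcm_ne_zero hg1 hg2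
  have hln : Nat.lcm g1 g2 ∣ n := Nat.lcm_dvd (Nat.gcd_dvd_right d n) (Nat.gcd_dvd_right e n)
  rw [Submodule.ne_bot_iff]
  constructor
  · rintro ⟨x, hx, hx0⟩
    rw [Submodule.mem_inf, zmod_smul_top_mem_iff hm hn hnm hsmul,
      zmod_smul_top_mem_iff hm hn hnm hsmul] at hx
    have hlx : Nat.lcm g1 g2 ∣ x.val := Nat.lcm_dvd hx.1 hx.2
    have hxv : x.val ≠ 0 := fun h => hx0 ((ZMod.val_eq_zero x).mp h)
    have := Nat.le_of_dvd (Nat.pos_of_ne_zero hxv) hlx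
    have := ZMod.val_lt x
    omega
  · intro hne
    have hllt : Nat.lcm g1 g2 < n :=
      lt_of_le_of_ne (Nat.le_of_dvd (by omega) hln) hne
    refine ⟨((Nat.lcm g1 g2 : ℕ) : ZMod n), ?_, ?_⟩
    · rw [Submodule.mem_inf, zmod_smul_top_mem_iff hm hn hnm hsmul,
        zmod_smul_top_mem_iff hm hn hnm hsmul, ZMod.val_natCast_of_lt hllt]
      exact ⟨Nat.dvd_lcm_left _ _, Nat.dvd_lcm_right _ _⟩
    · intro h
      rw [← ZMod.val_eq_zero, ZMod.val_natCast_of_lt hllt] at h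
      exact hl0 h


lemma cliqueNum_le_of_cliqueFree' {V : Type*} [Fintype V] {G : SimpleGraph V} {k : ℕ}
    (h : G.CliqueFree (k + 1)) : G.cliqueNum ≤ k := by
  by_contra hlt
  push_neg at hlt
  obtain ⟨s, hs⟩ := G.exists_isNClique_cliqueNum
  exact (h.mono hlt) s hs

lemma combinatorial_weakly_perfect {V : Type*} [Fintype V] (P : Finset ℕ) (hP : P.Nonempty)
    (D : V → Finset ℕ) (hD : ∀ v, D v ⊆ P)
    (G : SimpleGraph V) (hAdj : ∀ v w, G.Adj v w ↔ v ≠ w ∧ (D v ∩ D w).Nonempty)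
    (hmono : ∀ B C : Finset ℕ, B.Nonempty → B ⊆ C → C ⊂ P →
      ∃ f : {v // D v = B} → {v // D v = C}, Function.Injective f) :
    G.chromaticNumber = (G.cliqueNum : ℕ∞) := by
  classical
  by_cases hiso : ∀ v : V, D v = ∅
  · -- edgeless case
    have hnoadj : ∀ v w : V, ¬ G.Adj v w := by
      intro v w h
      rw [hAdj] at h
      obtain ⟨p, hp⟩ := h.2
      rw [hiso v] at hp
      simp at hp
    cases isEmpty_or_nonempty V with
    | inl hV =>
      rw [SimpleGraph.chromaticNumber_eq_zero_of_isEmpty]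
      have h0 : G.cliqueNum ≤ 0 := cliqueNum_le_of_cliqueFree' (by
        intro s hs
        obtain ⟨x, _⟩ := Finset.card_pos.mp (by rw [hs.2]; omega)
        exact hV.false x)
      have : G.cliqueNum = 0 := Nat.le_zero.mp h0
      rw [this, Nat.cast_zero]
    | inr hV =>
      have hcol : G.Colorable 1 :=
        ⟨SimpleGraph.Coloring.mk (fun _ => (0 : Fin 1)) (fun h => absurd h (hnoadj _ _))⟩
      have h1 : G.chromaticNumber ≤ 1 := by exact_mod_cast hcol.chromaticNumber_le
      have h2 : 0 < G.chromaticNumber := SimpleGraph.chromaticNumber_pos hcol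
      have hcn : G.cliqueNum = 1 := by
        have hle : G.cliqueNum ≤ 1 := cliqueNum_le_of_cliqueFree' (hcol.cliqueFree one_lt_two)
        have hge : 1 ≤ G.cliqueNum := by
          obtain ⟨v⟩ := hV
          have hcl : G.IsClique ({v} : Finset V) := by
            simp [SimpleGraph.isClique_iff]
          have := hcl.card_le_cliqueNum
          simpa using this
        omega
      rw [hcn, Nat.cast_one]
      exact le_antisymm h1 (ENat.one_le_iff_ne_zero.mpr h2.ne')
  · push_neg at hiso
    obtain ⟨v₀, hv₀⟩ := hiso
    have hv₀ne : (D v₀).Nonempty := hv₀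
    obtain ⟨p₀, hp₀⟩ := hP
    let w : Finset ℕ → ℕ := fun A => Fintype.card {v // D v = A}
    let sel : Finset ℕ → Prop := fun A => w (P \ A) < w A ∨ (w A = w (P \ A) ∧ p₀ ∈ A)
    let good : V → Prop := fun v => D v = P ∨ ((D v).Nonempty ∧ D v ≠ P ∧ sel (D v))
    let K : Finset V := Finset.univ.filter good
    have hKmem : ∀ v : V, v ∈ K ↔ good v := by
      intro v; simp [K]
    -- card monotonicity
    have hcard : ∀ B C : Finset ℕ, B.Nonempty → B ⊆ C → C ⊂ P → w B ≤ w C := by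
      intro B C h1 h2 h3
      obtain ⟨f, hf⟩ := hmono B C h1 h2 h3
      exact Fintype.card_le_of_injective f hf
    have hsdiffss : ∀ A : Finset ℕ, A.Nonempty → A ⊆ P → P \ A ⊂ P := by
      intro A h1 h2; exact Finset.sdiff_ssubset h2 h1
    have hsdiffne : ∀ A : Finset ℕ, A ⊆ P → A ≠ P → (P \ A).Nonempty := by
      intro A h1 h2
      rw [Finset.sdiff_nonempty]
      exact fun h => h2 (Finset.Subset.antisymm h1 h)
    have hsdiffnotP : ∀ A : Finset ℕ, A.Nonempty → A ⊆ P → (P \ A) ≠ P := by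
      rintro A ⟨a, ha⟩ hAP h
      have : a ∈ P \ A := h.symm ▸ hAP ha
      exact (Finset.mem_sdiff.mp this).2 ha
    -- if sel fails on a proper nonempty class, it holds on the complement
    have hselc : ∀ A : Finset ℕ, A ⊆ P → ¬ sel A → w A ≤ w (P \ A) ∧ sel (P \ A) := by
      intro A hAP hnsel
      have h1 : w A ≤ w (P \ A) := by
        by_contra h
        exact hnsel (Or.inl (by omega))
      refine ⟨h1, ?_⟩
      show w (P \ (P \ A)) < w (P \ A) ∨ (w (P \ A) = w (P \ (P \ A)) ∧ p₀ ∈ P \ A)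
      rw [Finset.sdiff_sdiff_eq_self hAP]
      rcases lt_or_eq_of_le h1 with h | h
      · exact Or.inl h
      · refine Or.inr ⟨h.symm, Finset.mem_sdiff.mpr ⟨hp₀, fun hpA => ?_⟩⟩
        exact hnsel (Or.inr ⟨h, hpA⟩)
    -- sel implies w (P \ A) ≤ w A
    have hselw : ∀ A : Finset ℕ, sel A → w (P \ A) ≤ w A := by
      intro A h
      rcases h with h | h
      · omega
      · omega
    -- K is a clique
    have hKadj : ∀ v ∈ K, ∀ u ∈ K, v ≠ u → G.Adj v u := by
      intro v hv u hu hne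
      rw [hAdj]
      refine ⟨hne, ?_⟩
      rw [hKmem] at hv hu
      have hDvne : (D v).Nonempty := by
        rcases hv with h | h
        · rw [h]; exact ⟨p₀, hp₀⟩
        · exact h.1
      have hDune : (D u).Nonempty := by
        rcases hu with h | h
        · rw [h]; exact ⟨p₀, hp₀⟩
        · exact h.1
      rcases hv with hv1 | ⟨hv1, hv2, hv3⟩
      · rw [hv1, Finset.inter_eq_right.mpr (hD u)]
        exact hDune
      rcases hu with hu1 | ⟨hu1, hu2, hu3⟩
      · rw [hu1, Finset.inter_eq_left.mpr (hD v)]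
        exact hDvne
      -- both proper nonempty with sel
      by_contra hempty
      rw [Finset.not_nonempty_iff_eq_empty] at hempty
      have hdisj1 : D u ⊆ P \ D v := by
        intro p hpu
        rw [Finset.mem_sdiff]
        refine ⟨hD u hpu, fun hpv => ?_⟩
        have : p ∈ D v ∩ D u := Finset.mem_inter.mpr ⟨hpv, hpu⟩
        rw [hempty] at this
        exact absurd this (Finset.notMem_empty p)
      have hdisj2 : D v ⊆ P \ D u := by
        intro p hpv
        rw [Finset.mem_sdiff]
        refine ⟨hD v hpv, fun hpu => ?_⟩
        have : p ∈ D v ∩ D u := Finset.mem_inter.mpr ⟨hpv, hpu⟩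
        rw [hempty] at this
        exact absurd this (Finset.notMem_empty p)
      have c1 : w (D u) ≤ w (P \ D v) := hcard _ _ hDune hdisj1 (hsdiffss _ hDvne (hD v))
      have c2 : w (P \ D v) ≤ w (D v) := hselw _ hv3
      have c3 : w (D v) ≤ w (P \ D u) := hcard _ _ hDvne hdisj2 (hsdiffss _ hDune (hD u))
      have c4 : w (P \ D u) ≤ w (D u) := hselw _ hu3
      have heqv : w (D v) = w (P \ D v) := by omega
      have hequ : w (D u) = w (P \ D u) := by omega
      have hpv : p₀ ∈ D v := by
        rcases hv3 with h | h
        · omega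
        · exact h.2
      have hpu : p₀ ∈ D u := by
        rcases hu3 with h | h
        · omega
        · exact h.2
      have : p₀ ∈ D v ∩ D u := Finset.mem_inter.mpr ⟨hpv, hpu⟩
      rw [hempty] at this
      exact absurd this (Finset.notMem_empty p₀)
    have hclique : G.IsClique (K : Set V) := by
      intro v hv u hu hne
      exact hKadj v hv u hu hne
    -- K is nonempty
    have hKne : ∃ k₀ : V, k₀ ∈ K := by
      by_cases h : good v₀
      · exact ⟨v₀, (hKmem v₀).mpr h⟩
      · have hDvP : D v₀ ≠ P := fun hh => h (Or.inl hh)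
        have hnsel : ¬ sel (D v₀) := fun hh => h (Or.inr ⟨hv₀ne, hDvP, hh⟩)
        obtain ⟨hwle, hselPD⟩ := hselc (D v₀) (hD v₀) hnsel
        have h1 : 0 < w (D v₀) := Fintype.card_pos_iff.mpr ⟨⟨v₀, rfl⟩⟩
        have h2 : 0 < w (P \ D v₀) := lt_of_lt_of_le h1 hwle
        obtain ⟨⟨u, hu⟩⟩ := Fintype.card_pos_iff.mp h2
        refine ⟨u, (hKmem u).mpr (Or.inr ⟨?_, ?_, ?_⟩)⟩
        · rw [hu]; exact hsdiffne _ (hD v₀) hDvP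
        · rw [hu]; exact hsdiffnotP _ hv₀ne (hD v₀)
        · rw [hu]; exact hselPD
    obtain ⟨k₀, hk₀⟩ := hKne
    -- class embeddings for the coloring
    have hembAll : ∀ A : Finset ℕ, ∃ g : {v : V // D v = A} → V,
        Function.Injective g ∧
        ((A.Nonempty ∧ A ≠ P ∧ ¬ sel A) → ∀ x, D (g x) = P \ A) ∧
        ((A.Nonempty ∧ A ≠ P ∧ ¬ sel A) → ∀ x, good (g x)) ∧
        ((¬ (A.Nonempty ∧ A ≠ P ∧ ¬ sel A)) → ∀ x, g x = x.1) := by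
      intro A
      by_cases hc : A.Nonempty ∧ A ≠ P ∧ ¬ sel A
      · by_cases hAP : A ⊆ P
        · obtain ⟨hwle, hselPD⟩ := hselc A hAP hc.2.2
          have hcardle : Fintype.card {v : V // D v = A} ≤ Fintype.card {v : V // D v = P \ A} :=
            hwle
          obtain ⟨f⟩ := Function.Embedding.nonempty_of_card_le hcardle
          refine ⟨fun x => (f x).1, ?_, ?_, ?_, ?_⟩
          · intro x y hxy
            exact f.injective (Subtype.ext hxy)
          · intro _ x
            exact (f x).2
          · intro _ x
            refine Or.inr ⟨?_, ?_, ?_⟩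
            · rw [(f x).2]; exact hsdiffne _ hAP hc.2.1
            · rw [(f x).2]; exact hsdiffnotP _ hc.1 hAP
            · rw [(f x).2]; exact hselPD
          · intro h; exact absurd hc h
        · -- impossible: classes are subsets of P, so the class is empty
          refine ⟨fun x => x.1, fun x y hxy => Subtype.ext hxy, ?_, ?_, fun _ x => rfl⟩
          · intro _ x
            exact absurd (x.2 ▸ hD x.1) hAP
          · intro _ x
            exact absurd (x.2 ▸ hD x.1) hAP
      · exact ⟨fun x => x.1, fun x y hxy => Subtype.ext hxy,
          fun h => absurd h hc, fun h => absurd h hc, fun _ x => rfl⟩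
    choose gfun hginj hgD hggood hgid using hembAll
    have hgcongr : ∀ (A B : Finset ℕ) (h : A = B) (x : V) (hx : D x = A) (hx' : D x = B),
        gfun A ⟨x, hx⟩ = gfun B ⟨x, hx'⟩ := by
      intro A B h x hx hx'
      subst h
      rfl
    -- the coloring function
    let colV : V → V := fun v =>
      if h : good v then v
      else if h2 : (D v).Nonempty then gfun (D v) ⟨v, rfl⟩ else k₀
    have hcond : ∀ v : V, ¬ good v → (D v).Nonempty →
        ((D v).Nonempty ∧ D v ≠ P ∧ ¬ sel (D v)) := by
      intro v h h2
      refine ⟨h2, fun hh => h (Or.inl hh), fun hh => h (Or.inr ⟨h2, fun hh2 => h (Or.inl hh2), hh⟩)⟩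
    have hcolmem : ∀ v : V, colV v ∈ K := by
      intro v
      show (if h : good v then v
        else if h2 : (D v).Nonempty then gfun (D v) ⟨v, rfl⟩ else k₀) ∈ K
      split_ifs with h h2
      · exact (hKmem v).mpr h
      · exact (hKmem _).mpr (hggood (D v) (hcond v h h2) ⟨v, rfl⟩)
      · exact hk₀
    have hproper : ∀ v u : V, G.Adj v u → colV v ≠ colV u := by
      intro v u hadj
      have hvu : v ≠ u := ((hAdj v u).mp hadj).1
      obtain ⟨p, hpmem⟩ := ((hAdj v u).mp hadj).2
      have hpv : p ∈ D v := (Finset.mem_inter.mp hpmem).1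
      have hpu : p ∈ D u := (Finset.mem_inter.mp hpmem).2
      have hDvne : (D v).Nonempty := ⟨p, hpv⟩
      have hDune : (D u).Nonempty := ⟨p, hpu⟩
      show (if h : good v then v else if h2 : (D v).Nonempty then gfun (D v) ⟨v, rfl⟩ else k₀) ≠
        (if h : good u then u else if h2 : (D u).Nonempty then gfun (D u) ⟨u, rfl⟩ else k₀)
      by_cases h1 : good v <;> by_cases h2 : good u
      · simp only [dif_pos h1, dif_pos h2]
        exact hvu
      · simp only [dif_pos h1, dif_neg h2, dif_pos hDune]
        intro he
        have hDc : D v = P \ D u := by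
          rw [he]
          exact hgD (D u) (hcond u h2 hDune) ⟨u, rfl⟩
        rw [hDc] at hpv
        exact (Finset.mem_sdiff.mp hpv).2 hpu
      · simp only [dif_neg h1, dif_pos h2, dif_pos hDvne]
        intro he
        have hDc : D u = P \ D v := by
          rw [← he]
          exact hgD (D v) (hcond v h1 hDvne) ⟨v, rfl⟩
        rw [hDc] at hpu
        exact (Finset.mem_sdiff.mp hpu).2 hpv
      · simp only [dif_neg h1, dif_neg h2, dif_pos hDvne, dif_pos hDune]
        intro he
        have hDv' : D (gfun (D v) ⟨v, rfl⟩) = P \ D v := hgD _ (hcond v h1 hDvne) _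
        have hDu' : D (gfun (D u) ⟨u, rfl⟩) = P \ D u := hgD _ (hcond u h2 hDune) _
        have hPP : P \ D v = P \ D u := by rw [← hDv', ← hDu', he]
        have hDeq : D v = D u := by
          have h3 := congrArg (fun s => P \ s) hPP
          simpa [Finset.sdiff_sdiff_eq_self (hD v), Finset.sdiff_sdiff_eq_self (hD u)] using h3
        have he2 : gfun (D v) ⟨v, rfl⟩ = gfun (D v) ⟨u, hDeq.symm⟩ :=
          he.trans (hgcongr (D u) (D v) hDeq.symm u rfl hDeq.symm)
        have := hginj (D v) he2
        exact hvu (congrArg Subtype.val this)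
    -- assemble the coloring
    let coloring : G.Coloring {x // x ∈ K} :=
      SimpleGraph.Coloring.mk (fun v => ⟨colV v, hcolmem v⟩)
        (fun {v u} hadj he => hproper v u hadj (congrArg Subtype.val he))
    have hcolorable : G.Colorable K.card := by
      have h := coloring.colorable
      rwa [Fintype.card_coe] at h
    have hclq : G.IsNClique K.card K := ⟨hclique, rfl⟩
    have hub : G.chromaticNumber ≤ (K.card : ℕ∞) := hcolorable.chromaticNumber_le
    have hωlb : K.card ≤ G.cliqueNum := hclique.card_le_cliqueNum
    have hωub : G.cliqueNum ≤ K.card :=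
      cliqueNum_le_of_cliqueFree' (hcolorable.cliqueFree (Nat.lt_succ_self _))
    have hlb : (K.card : ℕ∞) ≤ G.chromaticNumber := by
      rw [SimpleGraph.chromaticNumber]
      refine le_iInf₂ (fun nn hnn => ?_)
      have hc : G.Colorable nn := hnn
      by_contra hlt
      push_neg at hlt
      have hnnlt : nn < K.card := by exact_mod_cast hlt
      exact (hc.cliqueFree hnnlt) K hclq
    rw [le_antisymm hub hlb, le_antisymm hωub hωlb]


/-! ### Main theorem -/

/-- The `M`-intersection graph of ideals of `R`: vertices are the nontrivial ideals of `R`,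
and two distinct vertices `I`, `J` are adjacent iff `IM ∩ JM ≠ 0`. -/
def interGraph (R M : Type*) [CommRing R] [AddCommGroup M] [Module R M] :
    SimpleGraph {I : Ideal R // I ≠ ⊥ ∧ I ≠ ⊤} where
  Adj I J := I ≠ J ∧ (I.1 • ⊤ ⊓ J.1 • ⊤ : Submodule R M) ≠ ⊥
  symm := ⟨fun I J h => ⟨h.1.symm, by rw [inf_comm]; exact h.2⟩⟩
  loopless := ⟨fun I h => h.1 rfl⟩

/-- For `m, n ≥ 2` with `n ∣ m`, regarding `ℤ_n` as a `ℤ_m`-module via the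
natural cast, if `α_p ≤ 2β_p − 1` for every prime `p ∣ n` (where `α_p`, `β_p` are the
multiplicities of `p` in `m`, `n`), then `G_n(ℤ_m)` is weakly perfect. -/
theorem weakly_perfect_of_le (m n : ℕ) (hm : 2 ≤ m) (hn : 2 ≤ n) (hnm : n ∣ m)
    [Module (ZMod m) (ZMod n)]
    (hsmul : ∀ (a : ZMod m) (x : ZMod n), a • x = ZMod.castHom hnm (ZMod n) a * x)
    (hle : ∀ p : ℕ, p.Prime → p ∣ n → m.factorization p ≤ 2 * n.factorization p - 1) :
    (interGraph (ZMod m) (ZMod n)).chromaticNumber =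
      ((interGraph (ZMod m) (ZMod n)).cliqueNum : ℕ∞) := by
  classical
  haveI : NeZero m := ⟨by omega⟩
  haveI : NeZero n := ⟨by omega⟩
  choose dv hdvm hdv1 hdvm' hdvspan using fun I : {I : Ideal (ZMod m) // I ≠ ⊥ ∧ I ≠ ⊤} =>
    zmod_exists_divisor_span hm I.1 I.2.1 I.2.2
  have hdvlt : ∀ I, dv I < m := fun I =>
    lt_of_le_of_ne (Nat.le_of_dvd (by omega) (hdvm I)) (hdvm' I)
  have hdv0 : ∀ I, dv I ≠ 0 := by
    intro I h
    have := hdvm I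
    rw [h] at this
    have : m = 0 := Nat.eq_zero_of_zero_dvd this
    omega
  have hdvinj : Function.Injective dv := by
    intro I J h
    apply Subtype.ext
    rw [hdvspan I, hdvspan J, h]
  haveI : Fintype {I : Ideal (ZMod m) // I ≠ ⊥ ∧ I ≠ ⊤} :=
    Fintype.ofInjective (fun I => (⟨dv I, by have := hdvlt I; omega⟩ : Fin (m + 1)))
      (fun I J h => hdvinj (by simpa using congrArg Fin.val h))
  have hsurj : ∀ d : ℕ, d ∣ m → d ≠ 1 → d ≠ m →
      ∃ I : {I : Ideal (ZMod m) // I ≠ ⊥ ∧ I ≠ ⊤}, dv I = d := by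
    intro d hd h1 hm'
    have hne0 : Ideal.span {(d : ZMod m)} ≠ ⊥ := by
      rw [Ne, Ideal.span_singleton_eq_bot]
      intro h
      rw [ZMod.natCast_eq_zero_iff] at h
      exact hm' (Nat.dvd_antisymm hd h)
    have hnetop : Ideal.span {(d : ZMod m)} ≠ ⊤ := by
      rw [Ne, Ideal.span_singleton_eq_top]
      intro h
      rw [ZMod.isUnit_iff_coprime] at h
      have hg : Nat.gcd d m = d := Nat.gcd_eq_left hd
      rw [Nat.Coprime, hg] at h
      exact h1 h
    refine ⟨⟨Ideal.span {(d : ZMod m)}, hne0, hnetop⟩, ?_⟩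
    exact zmod_span_divisor_inj hm (hdvm _) (hdvm' _) hd hm'
      (hdvspan ⟨Ideal.span {(d : ZMod m)}, hne0, hnetop⟩).symm
  have hP : (n.primeFactors).Nonempty := Nat.nonempty_primeFactors.mpr (by omega)
  have hD : ∀ I, Ddef n (dv I) ⊆ n.primeFactors := fun I => Finset.filter_subset _ _
  have hAdj : ∀ I J, (interGraph (ZMod m) (ZMod n)).Adj I J ↔
      I ≠ J ∧ (Ddef n (dv I) ∩ Ddef n (dv J)).Nonempty := by
    intro I J
    constructor
    · rintro ⟨hne, hbot⟩
      refine ⟨hne, ?_⟩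
      rw [hdvspan I, hdvspan J] at hbot
      rw [zmod_inf_ne_bot_iff hm hn hnm hsmul] at hbot
      rwa [lcm_gcd_ne_iff hn (hdv0 I) (hdv0 J)] at hbot
    · rintro ⟨hne, hd⟩
      refine ⟨hne, ?_⟩
      rw [hdvspan I, hdvspan J, zmod_inf_ne_bot_iff hm hn hnm hsmul,
        lcm_gcd_ne_iff hn (hdv0 I) (hdv0 J)]
      exact hd
  have hmono : ∀ B C : Finset ℕ, B.Nonempty → B ⊆ C → C ⊂ n.primeFactors →
      ∃ f : {I // Ddef n (dv I) = B} → {I // Ddef n (dv I) = C}, Function.Injective f := by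
    intro B C hB hBC hCP
    have hstep := fun (x : {I // Ddef n (dv I) = B}) =>
      div_shift m n hm hn hnm hle hB hBC hCP (hdvm x.1) x.2
    choose d' hd'm hd'1 hd'ne hd'D hd'mul using hstep
    have hI' := fun x => hsurj (d' x) (hd'm x) (hd'1 x) (hd'ne x)
    choose I' hI'dv using hI'
    refine ⟨fun x => ⟨I' x, by rw [hI'dv x]; exact hd'D x⟩, ?_⟩
    intro x y hxy
    have h1 : I' x = I' y := congrArg Subtype.val hxy
    have h2 : d' x = d' y := by rw [← hI'dv x, ← hI'dv y, h1]
    have h3 : dv x.1 = dv y.1 := by rw [← hd'mul x, ← hd'mul y, h2]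
    exact Subtype.ext (hdvinj h3)
  exact combinatorial_weakly_perfect n.primeFactors hP (fun I => Ddef n (dv I)) hD
    (interGraph (ZMod m) (ZMod n)) hAdj hmono
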